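/- Let V be a real inner product space with compatible complex structure J and W the space of trilinear forms α with α(x,y,z) = −α(x,z,y) = −α(x,Jy,Jz). If α ∈ W is antisymmetric in the first two arguments, α(x,y,z) = −α(y,x,z), then α is totally cyclic-symmetric: α(x,y,z) = α(z,x,y) = α(y,z,x), and moreover α(x,y,z) = −α(Jx,Jy,z) for all x,y,z. -/

import Mathlib

/-- Membership in the Gray–Hervella space `W`. -/
def GrayHervella.memW {V : Type*} [NormedAddCommGroup V] [InnerProductSpace ℝ V]
    (J : V →ₗ[ℝ] V) (α : V →ₗ[ℝ] V →ₗ[ℝ] V →ₗ[ℝ] ℝ) : Prop :=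
  ∀ x y z : V, α x y z = - α x z y ∧ α x y z = - α x (J y) (J z)

/-- If `α ∈ W` is antisymmetric in its first two arguments, then `α` is
totally cyclic-symmetric, `α(x,y,z) = α(z,x,y) = α(y,z,x)`, and moreover
`α(x,y,z) = −α(Jx,Jy,z)`. -/
theorem W1_cyclic_and_Jskew
    {V : Type*} [NormedAddCommGroup V] [InnerProductSpace ℝ V]
    (J : V →ₗ[ℝ] V) (hJ2 : ∀ x : V, J (J x) = -x)
    (hJinner : ∀ x y : V, (inner ℝ (J x) (J y) : ℝ) = inner ℝ x y)
    (α : V →ₗ[ℝ] V →ₗ[ℝ] V →ₗ[ℝ] ℝ) (hα : GrayHervella.memW J α)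
    (hanti : ∀ x y z : V, α x y z = - α y x z) :
    ∀ x y z : V, α x y z = α z x y ∧ α x y z = α y z x ∧
      α x y z = - α (J x) (J y) z := by
  have hswap : ∀ x y z : V, α x y z = - α x z y := fun x y z => (hα x y z).1
  have hcyc : ∀ x y z : V, α x y z = α y z x := by
    intro x y z
    rw [hanti, hswap]; ring
  intro x y z
    ;
  refine ⟨by rw [hcyc z x y], hcyc x y z, ?_⟩
  calc α x y z = α z x y := by rw [hcyc z x y]
    _ = - α z (J x) (J y) := (hα z x y).2
    _ = - α (J x) (J y) z := by rw [hcyc z (J x) (J y)]
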